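/- The function t ↦ (t·cosh²(t) - sinh(t)·cosh(t)) / (t·sinh²(t)) is strictly increasing on (0,∞). -/

import Mathlib

open Real Set

/-- cosh t ≥ 1 + t²/2 for t ≥ 0 -/
lemma aux_cosh_ge (t : ℝ) (ht : 0 ≤ t) : 1 + t ^ 2 / 2 ≤ Real.cosh t := by
  have h : MonotoneOn (fun x : ℝ => Real.cosh x - 1 - x ^ 2 / 2) (Ici 0) := by
    apply monotoneOn_of_deriv_nonneg (convex_Ici 0)
    · exact (Real.continuous_cosh.sub continuous_const |>.sub
        (continuous_pow 2 |>.div_const 2)).continuousOn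
    · exact fun x hx => ((Real.differentiable_cosh x).sub (differentiable_const 1 x)).sub
        (((differentiable_pow 2).div_const 2) x) |>.differentiableWithinAt
    · intro x hx
      rw [interior_Ici, mem_Ioi] at hx
      have hd : HasDerivAt (fun x : ℝ => Real.cosh x - 1 - x ^ 2 / 2)
          (Real.sinh x - 0 - (2 * x ^ 1 * 1) / 2) x := by
        exact (((Real.hasDerivAt_cosh x).sub (hasDerivAt_const x 1)).sub
          (((hasDerivAt_id x).pow 2).div_const 2))
      rw [hd.deriv]
      have := Real.self_le_sinh_iff.2 hx.le
      simp only [pow_one, mul_one]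
      linarith
  have := h (self_mem_Ici) (mem_Ici.2 ht) ht
  simp only [Real.cosh_zero] at this
  linarith

/-- sinh t ≥ t + t³/6 for t ≥ 0 -/
lemma aux_sinh_ge (t : ℝ) (ht : 0 ≤ t) : t + t ^ 3 / 6 ≤ Real.sinh t := by
  have h : MonotoneOn (fun x : ℝ => Real.sinh x - x - x ^ 3 / 6) (Ici 0) := by
    apply monotoneOn_of_deriv_nonneg (convex_Ici 0)
    · exact (Real.continuous_sinh.sub continuous_id |>.sub
        (continuous_pow 3 |>.div_const 6)).continuousOn
    · exact fun x hx => ((Real.differentiable_sinh x).sub (differentiable_id x)).sub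
        (((differentiable_pow 3).div_const 6) x) |>.differentiableWithinAt
    · intro x hx
      rw [interior_Ici, mem_Ioi] at hx
      have hd : HasDerivAt (fun x : ℝ => Real.sinh x - x - x ^ 3 / 6)
          (Real.cosh x - 1 - (3 * x ^ 2 * 1) / 6) x := by
        exact (((Real.hasDerivAt_sinh x).sub (hasDerivAt_id x)).sub
          (((hasDerivAt_id x).pow 3).div_const 6))
      rw [hd.deriv]
      have := aux_cosh_ge x hx.le
      norm_num
      linarith
  have := h (self_mem_Ici) (mem_Ici.2 ht) ht
  simp only [Real.sinh_zero] at this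
  linarith

/-- v(t) = t·cosh t − sinh t + (t²/3)·sinh t > 0 for t > 0 -/
lemma aux_v_pos (t : ℝ) (ht : 0 < t) :
    0 < t * Real.cosh t - Real.sinh t + t ^ 2 / 3 * Real.sinh t := by
  have h : StrictMonoOn (fun x : ℝ => x * Real.cosh x - Real.sinh x + x ^ 2 / 3 * Real.sinh x)
      (Ici 0) := by
    apply strictMonoOn_of_deriv_pos (convex_Ici 0)
    · exact ((continuous_id.mul Real.continuous_cosh).sub Real.continuous_sinh |>.add
        (((continuous_pow 2).div_const 3).mul Real.continuous_sinh)).continuousOn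
    · intro x hx
      rw [interior_Ici, mem_Ioi] at hx
      have hd : HasDerivAt
          (fun x : ℝ => x * Real.cosh x - Real.sinh x + x ^ 2 / 3 * Real.sinh x)
          ((1 * Real.cosh x + x * Real.sinh x - Real.cosh x) +
            ((2 * x ^ 1 * 1) / 3 * Real.sinh x + x ^ 2 / 3 * Real.cosh x)) x := by
        exact (((hasDerivAt_id x).mul (Real.hasDerivAt_cosh x)).sub
          (Real.hasDerivAt_sinh x)).add
          ((((hasDerivAt_id x).pow 2).div_const 3).mul (Real.hasDerivAt_sinh x))
      rw [hd.deriv]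
      have hs : 0 < Real.sinh x := Real.sinh_pos_iff.2 hx
      have hc : 0 < Real.cosh x := Real.cosh_pos x
      have h2 : (0:ℝ) < x ^ 2 := by positivity
      simp only [pow_one, one_mul, mul_one]
      nlinarith [mul_pos hx hs, mul_pos h2 hc]
  have := h (self_mem_Ici) (mem_Ici.2 ht.le) ht
  simp only [Real.sinh_zero, Real.cosh_zero] at this
  linarith [this]

/-- tanh-type bound: (t − t³/3)·cosh t < sinh t for t > 0 -/
lemma aux_tanh_gt (t : ℝ) (ht : 0 < t) :
    (t - t ^ 3 / 3) * Real.cosh t < Real.sinh t := by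
  have h : StrictMonoOn
      (fun x : ℝ => Real.sinh x - x * Real.cosh x + x ^ 3 / 3 * Real.cosh x) (Ici 0) := by
    apply strictMonoOn_of_deriv_pos (convex_Ici 0)
    · exact ((Real.continuous_sinh.sub (continuous_id.mul Real.continuous_cosh)).add
        (((continuous_pow 3).div_const 3).mul Real.continuous_cosh)).continuousOn
    · intro x hx
      rw [interior_Ici, mem_Ioi] at hx
      have hd : HasDerivAt
          (fun x : ℝ => Real.sinh x - x * Real.cosh x + x ^ 3 / 3 * Real.cosh x)
          ((Real.cosh x - (1 * Real.cosh x + x * Real.sinh x)) +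
            ((3 * x ^ 2 * 1) / 3 * Real.cosh x + x ^ 3 / 3 * Real.sinh x)) x := by
        exact ((Real.hasDerivAt_sinh x).sub
          ((hasDerivAt_id x).mul (Real.hasDerivAt_cosh x))).add
          ((((hasDerivAt_id x).pow 3).div_const 3).mul (Real.hasDerivAt_cosh x))
      rw [hd.deriv]
      have hv := aux_v_pos x hx
      simp only [one_mul, mul_one]
      nlinarith [mul_pos hx (aux_v_pos x hx)]
  have := h (self_mem_Ici) (mem_Ici.2 ht.le) ht
  simp only [Real.sinh_zero, Real.cosh_zero] at this
  nlinarith [this]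

/-- key positivity: g(t) = cosh·sinh² + t·sinh − 2t²·cosh > 0 for t > 0 -/
lemma aux_g_pos (t : ℝ) (ht : 0 < t) :
    0 < Real.cosh t * Real.sinh t ^ 2 + t * Real.sinh t - 2 * t ^ 2 * Real.cosh t := by
  have h1 := aux_sinh_ge t ht.le
  have h2 := aux_tanh_gt t ht
  have hc : (1:ℝ) ≤ Real.cosh t := Real.one_le_cosh t
  have hs : 0 < Real.sinh t := Real.sinh_pos_iff.2 ht
  have hts : (0:ℝ) < t + t ^ 3 / 6 := by positivity
  have hc0 : (0:ℝ) < Real.cosh t := lt_of_lt_of_le one_pos hc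
  have hsq : (t + t ^ 3 / 6) ^ 2 ≤ Real.sinh t ^ 2 := by nlinarith
  have h3 : Real.cosh t * (t + t ^ 3 / 6) ^ 2 ≤ Real.cosh t * Real.sinh t ^ 2 :=
    mul_le_mul_of_nonneg_left hsq hc0.le
  have h4 : t * ((t - t ^ 3 / 3) * Real.cosh t) < t * Real.sinh t :=
    mul_lt_mul_of_pos_left h2 ht
  nlinarith [pow_pos ht 6, mul_pos (pow_pos ht 6) hc0]

theorem stmt_13 :
    StrictMonoOn (fun t : ℝ =>
      (t * Real.cosh t ^ 2 - Real.sinh t * Real.cosh t) / (t * Real.sinh t ^ 2))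
      (Set.Ioi 0) := by
  apply strictMonoOn_of_deriv_pos (convex_Ioi 0)
  · apply ContinuousOn.div
    · exact ((continuous_id.mul (Real.continuous_cosh.pow 2)).sub
        (Real.continuous_sinh.mul Real.continuous_cosh)).continuousOn
    · exact (continuous_id.mul (Real.continuous_sinh.pow 2)).continuousOn
    · intro x hx
      rw [mem_Ioi] at hx
      have hs : 0 < Real.sinh x := Real.sinh_pos_iff.2 hx
      positivity
  · intro x hx
    rw [interior_Ioi, mem_Ioi] at hx
    set s := Real.sinh x with hs_def
    set c := Real.cosh x with hc_def
    have hs : 0 < s := Real.sinh_pos_iff.2 hx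
    have hc : 0 < c := Real.cosh_pos x
    have hD : x * s ^ 2 ≠ 0 := by positivity
    have hN : HasDerivAt (fun t : ℝ => t * Real.cosh t ^ 2 - Real.sinh t * Real.cosh t)
        ((1 * c ^ 2 + x * (2 * c ^ 1 * s)) - (c * c + s * s)) x := by
      exact ((hasDerivAt_id x).mul ((Real.hasDerivAt_cosh x).pow 2)).sub
        ((Real.hasDerivAt_sinh x).mul (Real.hasDerivAt_cosh x))
    have hDd : HasDerivAt (fun t : ℝ => t * Real.sinh t ^ 2)
        (1 * s ^ 2 + x * (2 * s ^ 1 * c)) x := by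
      exact (hasDerivAt_id x).mul ((Real.hasDerivAt_sinh x).pow 2)
    have hf := hN.div hDd hD
    rw [show (fun t : ℝ => (t * Real.cosh t ^ 2 - Real.sinh t * Real.cosh t) / (t * Real.sinh t ^ 2)) = ((fun t : ℝ => t * Real.cosh t ^ 2 - Real.sinh t * Real.cosh t) / fun t : ℝ => t * Real.sinh t ^ 2) from rfl, hf.deriv]
    apply div_pos
    · have hkey : (1 * c ^ 2 + x * (2 * c ^ 1 * s) - (c * c + s * s)) * (x * s ^ 2) -
          (x * c ^ 2 - s * c) * (1 * s ^ 2 + x * (2 * s ^ 1 * c)) =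
          s * (c * s ^ 2 + x * s - 2 * x ^ 2 * c) := by
        have h := Real.cosh_sq_sub_sinh_sq x
        rw [← hs_def, ← hc_def] at h
        linear_combination (x * s ^ 2 - 2 * x ^ 2 * c * s) * h
      rw [hkey]
      exact mul_pos hs (aux_g_pos x hx)
    · positivity
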